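/- Let λ be a partition and let w be an invertible element of K such that every factor occurring in a denominator below is nonzero. Then ∏_{i=1}^{ℓ(λ)} ∏_{j=1}^{λ_i} g(q^{1−j} t^{i−1} w) = [(1−w)/(1−q t^{−1} w)] · B^-_λ(w). -/

import Mathlib

open Finset

noncomputable section

/-- `G^+(w) = (1-qw)(1-t⁻¹w)(1-q⁻¹tw)`. -/
def Gplus {K : Type*} [Field K] (q t w : K) : K :=
  (1 - q * w) * (1 - t⁻¹ * w) * (1 - q⁻¹ * t * w)

/-- `G^-(w) = (1-q⁻¹w)(1-tw)(1-qt⁻¹w)`. -/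
def Gminus {K : Type*} [Field K] (q t w : K) : K :=
  (1 - q⁻¹ * w) * (1 - t * w) * (1 - q * t⁻¹ * w)

/-- `g(w) = G^+(w)/G^-(w)`. -/
def gfun {K : Type*} [Field K] (q t w : K) : K := Gplus q t w / Gminus q t w

/-- `B^-_λ(w)`, with the product taken over `i = 1,…,L` (correct whenever `L ≥ ℓ(λ)`). -/
def Bminus {K : Type*} [Field K] (q t : K) (lam : ℕ → ℕ) (L : ℕ) (w : K) : K :=
  ((1 - q ^ (-(lam 1 : ℤ) + 1) * t⁻¹ * w) / (1 - q ^ (-(lam 1 : ℤ)) * w)) *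
  ∏ i ∈ Finset.Icc 1 L,
    ((1 - q ^ (-(lam i : ℤ)) * t ^ (i : ℤ) * w) *
      (1 - q ^ (-(lam (i + 1) : ℤ) + 1) * t ^ ((i : ℤ) - 1) * w)) /
    ((1 - q ^ (-(lam (i + 1) : ℤ)) * t ^ (i : ℤ) * w) *
      (1 - q ^ (-(lam i : ℤ) + 1) * t ^ ((i : ℤ) - 1) * w))

lemma shiftOne {M : Type*} [CommMonoid M] (f : ℕ → M) (m : ℕ) :
    (∏ j ∈ range m, f j) * f m = f 0 * ∏ j ∈ range m, f (j + 1) := by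
  rw [← prod_range_succ, prod_range_succ', mul_comm]

lemma rowX {K : Type*} [Field K] (q t w : K) (hq : q ≠ 0) (ht : t ≠ 0) (k : ℤ) (n : ℕ) :
    (∏ j ∈ range n, Gplus q t (q ^ (-(j:ℤ)) * t ^ k * w)) *
      ((1 - q ^ (-(n:ℤ)) * q * t ^ k * w) * (1 - q ^ (-(n:ℤ)) * t ^ k * w) *
        ((1 - q * t ^ (k-1) * w) * (1 - t ^ (k+1) * w)))
  = (∏ j ∈ range n, Gminus q t (q ^ (-(j:ℤ)) * t ^ k * w)) *
      ((1 - q * t ^ k * w) * (1 - t ^ k * w) *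
        ((1 - q ^ (-(n:ℤ)) * q * t ^ (k-1) * w) * (1 - q ^ (-(n:ℤ)) * t ^ (k+1) * w))) := by
  set f1 : ℕ → K := fun j => 1 - q ^ (-(j:ℤ)) * q * t ^ k * w with hf1
  set g3 : ℕ → K := fun j => 1 - q ^ (-(j:ℤ)) * q * t ^ (k-1) * w with hg3
  set g2 : ℕ → K := fun j => 1 - q ^ (-(j:ℤ)) * t ^ (k+1) * w with hg2
  have hcast : ∀ j : ℕ, (q : K) ^ (-((j+1 : ℕ) : ℤ)) = q ^ (-(j:ℤ)) * q⁻¹ := by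
    intro j
    push_cast
    rw [neg_add, zpow_add₀ hq, zpow_neg_one]
  have htk : t ^ k = t ^ (k-1) * t := by
    rw [← zpow_add_one₀ ht]; ring_nf
  have htk1 : t ^ (k+1) = t ^ (k-1) * t * t := by
    rw [show k+1 = k-1+1+1 by ring, zpow_add_one₀ ht, zpow_add_one₀ ht]
  have hGp : ∀ j ∈ range n, Gplus q t (q ^ (-(j:ℤ)) * t ^ k * w)
      = f1 j * (g3 (j+1) * g2 (j+1)) := by
    intro j _
    simp only [Gplus, hf1, hg3, hg2, hcast, htk, htk1]
    generalize q ^ (-(j:ℤ)) = Q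
    generalize t ^ (k-1) = T
    field_simp
  have hGm : ∀ j ∈ range n, Gminus q t (q ^ (-(j:ℤ)) * t ^ k * w)
      = f1 (j+2) * (g3 j * g2 j) := by
    intro j _
    have h2 : (q : K) ^ (-((j+2 : ℕ) : ℤ)) = q ^ (-(j:ℤ)) * q⁻¹ * q⁻¹ := by
      push_cast
      rw [show -((j:ℤ)+2) = -(j:ℤ) + -1 + -1 by ring, zpow_add₀ hq, zpow_add₀ hq, zpow_neg_one]
    simp only [Gminus, hf1, hg3, hg2, h2, htk, htk1]
    generalize q ^ (-(j:ℤ)) = Q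
    generalize t ^ (k-1) = T
    field_simp
  rw [prod_congr rfl hGp, prod_congr rfl hGm]
  simp only [prod_mul_distrib]
  -- boundary values
  have hf10 : f1 0 = 1 - q * t ^ k * w := by
    simp only [hf1]; norm_num
  have hf11 : f1 1 = 1 - t ^ k * w := by
    simp only [hf1]
    rw [show -((1:ℕ):ℤ) = -1 by norm_num, zpow_neg_one, inv_mul_cancel₀ hq, one_mul]
  have hf1n1 : f1 (n+1) = 1 - q ^ (-(n:ℤ)) * t ^ k * w := by
    simp only [hf1, hcast]
    rw [mul_assoc (q ^ (-(n:ℤ))), inv_mul_cancel₀ hq, mul_one]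
  have hg30 : g3 0 = 1 - q * t ^ (k-1) * w := by
    simp only [hg3]; norm_num
  have hg20 : g2 0 = 1 - t ^ (k+1) * w := by
    simp only [hg2]; norm_num
  have sh1 : (∏ j ∈ range n, f1 j) * f1 n = f1 0 * ∏ j ∈ range n, f1 (j+1) := shiftOne f1 n
  have sh2 : (∏ j ∈ range n, f1 (j+1)) * f1 (n+1) = f1 1 * ∏ j ∈ range n, f1 (j+2) := by
    have := shiftOne (fun j => f1 (j+1)) n
    simpa using this
  have sh3 : (∏ j ∈ range n, g3 j) * g3 n = g3 0 * ∏ j ∈ range n, g3 (j+1) := shiftOne g3 n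
  have sh4 : (∏ j ∈ range n, g2 j) * g2 n = g2 0 * ∏ j ∈ range n, g2 (j+1) := shiftOne g2 n
  rw [← hf10, ← hf11, ← hf1n1, ← hg30, ← hg20]
  linear_combination
    (f1 (n+1) * (∏ j ∈ range n, g3 (j+1)) * (∏ j ∈ range n, g2 (j+1)) * g3 0 * g2 0) * sh1 +
    (f1 0 * (∏ j ∈ range n, g3 (j+1)) * (∏ j ∈ range n, g2 (j+1)) * g3 0 * g2 0) * sh2 -
    (f1 0 * f1 1 * (∏ j ∈ range n, f1 (j+2)) * ((∏ j ∈ range n, g2 j) * g2 n)) * sh3 -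
    (f1 0 * f1 1 * (∏ j ∈ range n, f1 (j+2)) * (g3 0 * (∏ j ∈ range n, g3 (j+1)))) * sh4

lemma master {K : Type*} [Field K] (q t w : K) (hq : q ≠ 0) (ht : t ≠ 0)
    (L : ℕ) (m : ℕ → ℕ) (hmL : m L = 0)
    (hU1 : ∀ k ∈ range L, 1 - q * t ^ (k:ℤ) * w ≠ 0)
    (hU2 : ∀ k ∈ range L, 1 - t ^ ((k:ℤ)+1) * w ≠ 0) :
    (∏ k ∈ range L, ∏ j ∈ range (m k), Gplus q t (q ^ (-(j:ℤ)) * t ^ (k:ℤ) * w)) *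
      ((1 - q * t⁻¹ * w) * ((1 - q ^ (-(m 0 : ℤ)) * w) *
        ∏ k ∈ range L, ((1 - q ^ (-(m (k+1) : ℤ)) * t ^ ((k:ℤ)+1) * w) *
          (1 - q ^ (-(m k : ℤ)) * q * t ^ (k:ℤ) * w))))
  = (∏ k ∈ range L, ∏ j ∈ range (m k), Gminus q t (q ^ (-(j:ℤ)) * t ^ (k:ℤ) * w)) *
      ((1 - w) * ((1 - q ^ (-(m 0 : ℤ)) * q * t⁻¹ * w) *
        ∏ k ∈ range L, ((1 - q ^ (-(m k : ℤ)) * t ^ ((k:ℤ)+1) * w) *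
          (1 - q ^ (-(m (k+1) : ℤ)) * q * t ^ (k:ℤ) * w)))) := by
  set F1 : ℕ → K := fun k => 1 - q ^ (-(m k : ℤ)) * q * t ^ (k:ℤ) * w with hF1
  set F2 : ℕ → K := fun k => 1 - q ^ (-(m k : ℤ)) * t ^ (k:ℤ) * w with hF2
  set F3 : ℕ → K := fun k => 1 - q ^ (-(m k : ℤ)) * q * t ^ ((k:ℤ)-1) * w with hF3
  set F4 : ℕ → K := fun k => 1 - q ^ (-(m k : ℤ)) * t ^ ((k:ℤ)+1) * w with hF4
  set D : ℕ → K := fun k => 1 - q * t ^ ((k:ℤ)-1) * w with hD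
  set E : ℕ → K := fun k => 1 - t ^ (k:ℤ) * w with hE
  have hcast1 : ∀ k : ℕ, ((k+1 : ℕ) : ℤ) = (k:ℤ)+1 := by intro k; push_cast; ring
  have hrow : ∀ k ∈ range L,
      (∏ j ∈ range (m k), Gplus q t (q ^ (-(j:ℤ)) * t ^ (k:ℤ) * w)) *
        (F1 k * F2 k * (D k * E (k+1)))
    = (∏ j ∈ range (m k), Gminus q t (q ^ (-(j:ℤ)) * t ^ (k:ℤ) * w)) *
        (D (k+1) * E k * (F3 k * F4 k)) := by
    intro k _
    simp only [hF1, hF2, hF3, hF4, hD, hE, hcast1, add_sub_cancel_right]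
    exact rowX q t w hq ht (k:ℤ) (m k)
  have big := prod_congr rfl hrow
  simp only [prod_mul_distrib] at big
  -- shift identities
  have sh1 : (∏ k ∈ range L, D k) * D L = (1 - q * t⁻¹ * w) * ∏ k ∈ range L, D (k+1) := by
    have := shiftOne D L
    rwa [show D 0 = 1 - q * t⁻¹ * w by simp only [hD]; norm_num] at this
  have sh2 : (∏ k ∈ range L, E k) * E L = (1 - w) * ∏ k ∈ range L, E (k+1) := by
    have := shiftOne E L
    rwa [show E 0 = 1 - w by simp only [hE]; norm_num] at this
  have sh3 : (∏ k ∈ range L, F2 k) * E L = (1 - q ^ (-(m 0 : ℤ)) * w) * ∏ k ∈ range L, F2 (k+1) := by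
    have := shiftOne F2 L
    rwa [show F2 L = E L by simp only [hF2, hE, hmL]; norm_num,
      show F2 0 = 1 - q ^ (-(m 0 : ℤ)) * w by simp only [hF2]; norm_num] at this
  have sh4 : (∏ k ∈ range L, F3 k) * D L
      = (1 - q ^ (-(m 0 : ℤ)) * q * t⁻¹ * w) * ∏ k ∈ range L, F3 (k+1) := by
    have := shiftOne F3 L
    rwa [show F3 L = D L by simp only [hF3, hD, hmL]; norm_num,
      show F3 0 = 1 - q ^ (-(m 0 : ℤ)) * q * t⁻¹ * w by simp only [hF3]; norm_num] at this
  -- rewrite goal's B-factors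
  have hDB : (∏ k ∈ range L, ((1 - q ^ (-(m (k+1) : ℤ)) * t ^ ((k:ℤ)+1) * w) *
        (1 - q ^ (-(m k : ℤ)) * q * t ^ (k:ℤ) * w)))
      = (∏ k ∈ range L, F2 (k+1)) * ∏ k ∈ range L, F1 k := by
    rw [← prod_mul_distrib]
    exact prod_congr rfl fun k _ => by simp only [hF2, hF1, hcast1]
  have hNB : (∏ k ∈ range L, ((1 - q ^ (-(m k : ℤ)) * t ^ ((k:ℤ)+1) * w) *
        (1 - q ^ (-(m (k+1) : ℤ)) * q * t ^ (k:ℤ) * w)))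
      = (∏ k ∈ range L, F4 k) * ∏ k ∈ range L, F3 (k+1) := by
    rw [← prod_mul_distrib]
    exact prod_congr rfl fun k _ => by simp only [hF4, hF3, hcast1, add_sub_cancel_right]
  rw [hDB, hNB]
  have hD'ne : (∏ k ∈ range L, D (k+1)) ≠ 0 := by
    rw [prod_ne_zero_iff]
    intro k hk
    have := hU1 k hk
    simpa only [hD, hcast1, add_sub_cancel_right] using this
  have hE'ne : (∏ k ∈ range L, E (k+1)) ≠ 0 := by
    rw [prod_ne_zero_iff]
    intro k hk
    have := hU2 k hk
    simpa only [hE, hcast1] using this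
  refine mul_right_cancel₀ (mul_ne_zero hD'ne hE'ne) ?_
  linear_combination
    (D L * E L) * big
    - ((∏ k ∈ range L, ∏ j ∈ range (m k), Gplus q t (q ^ (-(j:ℤ)) * t ^ (k:ℤ) * w)) *
        (∏ k ∈ range L, F1 k) * (∏ k ∈ range L, E (k+1)) *
        (1 - q ^ (-(m 0 : ℤ)) * w) * (∏ k ∈ range L, F2 (k+1))) * sh1
    - ((∏ k ∈ range L, ∏ j ∈ range (m k), Gplus q t (q ^ (-(j:ℤ)) * t ^ (k:ℤ) * w)) *
        (∏ k ∈ range L, F1 k) * (∏ k ∈ range L, E (k+1)) *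
        (∏ k ∈ range L, D k) * D L) * sh3
    + ((∏ k ∈ range L, ∏ j ∈ range (m k), Gminus q t (q ^ (-(j:ℤ)) * t ^ (k:ℤ) * w)) *
        (∏ k ∈ range L, D (k+1)) * (∏ k ∈ range L, F4 k) *
        (1 - q ^ (-(m 0 : ℤ)) * q * t⁻¹ * w) * (∏ k ∈ range L, F3 (k+1))) * sh2
    + ((∏ k ∈ range L, ∏ j ∈ range (m k), Gminus q t (q ^ (-(j:ℤ)) * t ^ (k:ℤ) * w)) *
        (∏ k ∈ range L, D (k+1)) * (∏ k ∈ range L, F4 k) *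
        (∏ k ∈ range L, E k) * E L) * sh4

theorem stmt3 {K : Type*} [Field K] (q t : K) (hq : q ≠ 0) (ht : t ≠ 0)
    (w : K) (hw : w ≠ 0)
    (lam : ℕ → ℕ) (L : ℕ)
    (hmono : ∀ k, 1 ≤ k → lam (k + 1) ≤ lam k)
    (hL : ∀ k, L < k → lam k = 0)
    (hg : ∀ i ∈ Finset.Icc 1 L, ∀ j ∈ Finset.Icc 1 (lam i),
      Gminus q t (q ^ (1 - (j : ℤ)) * t ^ ((i : ℤ) - 1) * w) ≠ 0)
    (hB0 : 1 - q ^ (-(lam 1 : ℤ)) * w ≠ 0)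
    (hB : ∀ i ∈ Finset.Icc 1 L,
      1 - q ^ (-(lam (i + 1) : ℤ)) * t ^ (i : ℤ) * w ≠ 0 ∧
      1 - q ^ (-(lam i : ℤ) + 1) * t ^ ((i : ℤ) - 1) * w ≠ 0)
    (hr : 1 - q * t⁻¹ * w ≠ 0) :
    (∏ i ∈ Finset.Icc 1 L, ∏ j ∈ Finset.Icc 1 (lam i),
        gfun q t (q ^ (1 - (j : ℤ)) * t ^ ((i : ℤ) - 1) * w)) =
      (1 - w) / (1 - q * t⁻¹ * w) * Bminus q t lam L w := by
  by_cases hex : ∃ i ∈ Finset.Icc 1 L, 1 - q * t ^ ((i:ℤ) - 1) * w = 0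
  · -- degenerate case: both sides vanish
    obtain ⟨i, hi, hz⟩ := hex
    have him := mem_Icc.mp hi
    have hlami : 1 ≤ lam i := by
      by_contra h
      have h0 : lam i = 0 := by omega
      have h2 := (hB i hi).2
      rw [h0] at h2
      norm_num at h2
      exact h2 hz
    have hlam1 : lam (i + 1) = 0 := by
      by_contra h
      have h1 : 1 ≤ lam (i + 1) := by omega
      have hiL : i + 1 ≤ L := by
        by_contra hh
        have := hL (i + 1) (by omega)
        omega
      have hgm := hg (i + 1) (mem_Icc.mpr ⟨by omega, hiL⟩) 1 (mem_Icc.mpr ⟨le_rfl, h1⟩)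
      apply hgm
      rw [Gminus]
      have : 1 - q * t⁻¹ * (q ^ ((1:ℤ) - ((1:ℕ):ℤ)) * t ^ (((i+1:ℕ):ℤ) - 1) * w) = 0 := by
        rw [show ((1:ℤ) - ((1:ℕ):ℤ)) = 0 by norm_num, zpow_zero, one_mul,
          show ((i+1:ℕ):ℤ) - 1 = ((i:ℤ) - 1) + 1 by push_cast; ring,
          zpow_add_one₀ ht]
        field_simp
        linear_combination hz
      rw [this, mul_zero]
    have hLHS0 : (∏ i ∈ Finset.Icc 1 L, ∏ j ∈ Finset.Icc 1 (lam i),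
        gfun q t (q ^ (1 - (j : ℤ)) * t ^ ((i : ℤ) - 1) * w)) = 0 := by
      apply prod_eq_zero hi
      apply prod_eq_zero (mem_Icc.mpr ⟨le_rfl, hlami⟩)
      rw [gfun]
      have : Gplus q t (q ^ ((1:ℤ) - ((1:ℕ):ℤ)) * t ^ ((i:ℤ) - 1) * w) = 0 := by
        rw [Gplus, show ((1:ℤ) - ((1:ℕ):ℤ)) = 0 by norm_num, zpow_zero, one_mul,
          show 1 - q * (t ^ ((i:ℤ) - 1) * w) = 0 by linear_combination hz]
        ring
      rw [this, zero_div]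
    have hRHS0 : Bminus q t lam L w = 0 := by
      rw [Bminus]
      apply mul_eq_zero_of_right
      apply prod_eq_zero hi
      apply div_eq_zero_iff.mpr
      left
      apply mul_eq_zero_of_right
      rw [hlam1]
      norm_num
      linear_combination hz
    rw [hLHS0, hRHS0, mul_zero]
  · -- main case
    push_neg at hex
    -- nonvanishing of the telescoping factors
    have hU1 : ∀ k ∈ range L, 1 - q * t ^ (k:ℤ) * w ≠ 0 := by
      intro k hk
      have hk' : k + 1 ∈ Finset.Icc 1 L := mem_Icc.mpr ⟨by omega, by
        have := mem_range.mp hk; omega⟩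
      have := hex (k+1) hk'
      rwa [show ((k+1:ℕ):ℤ) - 1 = (k:ℤ) by push_cast; ring] at this
    have hU2 : ∀ k ∈ range L, 1 - t ^ ((k:ℤ)+1) * w ≠ 0 := by
      intro k hk
      have hkL := mem_range.mp hk
      have hi : k + 1 ∈ Finset.Icc 1 L := mem_Icc.mpr ⟨by omega, by omega⟩
      by_cases hmi : 1 ≤ lam (k+1)
      · have hgm := hg (k+1) hi 1 (mem_Icc.mpr ⟨le_rfl, hmi⟩)
        rw [Gminus] at hgm
        have h2 := right_ne_zero_of_mul (left_ne_zero_of_mul hgm)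
        rwa [show (1:K) - t * (q ^ ((1:ℤ) - ((1:ℕ):ℤ)) * t ^ (((k+1:ℕ):ℤ) - 1) * w)
            = 1 - t ^ ((k:ℤ)+1) * w by
          rw [show ((1:ℤ) - ((1:ℕ):ℤ)) = 0 by norm_num, zpow_zero, one_mul,
            show ((k+1:ℕ):ℤ) - 1 = (k:ℤ) by push_cast; ring, zpow_add_one₀ ht]
          ring] at h2
      · have h0 : lam (k+1) = 0 := by omega
        have h1 : lam (k+2) = 0 :=
          Nat.le_zero.mp (h0 ▸ hmono (k+1) (by omega))
        have := (hB (k+1) hi).1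
        rw [show k+1+1 = k+2 from rfl, h1] at this
        rwa [show (-(0:ℕ):ℤ) = 0 by norm_num, zpow_zero, one_mul,
          show ((k+1:ℕ):ℤ) = (k:ℤ)+1 by push_cast; ring] at this
    -- instantiate master
    have M := master q t w hq ht L (fun k => lam (k+1)) (hL (L+1) (by omega)) hU1 hU2
    beta_reduce at M
    simp only [zero_add] at M
    -- conversions between Icc-indexed and range-indexed products
    have hGpconv : (∏ i ∈ Finset.Icc 1 L, ∏ j ∈ Finset.Icc 1 (lam i),
          Gplus q t (q ^ (1 - (j : ℤ)) * t ^ ((i : ℤ) - 1) * w))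
        = ∏ k ∈ range L, ∏ j ∈ range (lam (k+1)),
            Gplus q t (q ^ (-(j:ℤ)) * t ^ (k:ℤ) * w) := by
      rw [← Finset.Ico_add_one_right_eq_Icc, prod_Ico_eq_prod_range]
      simp only [Nat.add_sub_cancel]
      refine prod_congr rfl fun k _ => ?_
      rw [Nat.add_comm 1 k, ← Finset.Ico_add_one_right_eq_Icc, prod_Ico_eq_prod_range]
      simp only [Nat.add_sub_cancel]
      refine prod_congr rfl fun j _ => ?_
      rw [show (1 : ℤ) - ((1+j : ℕ):ℤ) = -(j:ℤ) by push_cast; ring,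
        show ((k+1 : ℕ):ℤ) - 1 = (k:ℤ) by push_cast; ring]
    have hGmconv : (∏ i ∈ Finset.Icc 1 L, ∏ j ∈ Finset.Icc 1 (lam i),
          Gminus q t (q ^ (1 - (j : ℤ)) * t ^ ((i : ℤ) - 1) * w))
        = ∏ k ∈ range L, ∏ j ∈ range (lam (k+1)),
            Gminus q t (q ^ (-(j:ℤ)) * t ^ (k:ℤ) * w) := by
      rw [← Finset.Ico_add_one_right_eq_Icc, prod_Ico_eq_prod_range]
      simp only [Nat.add_sub_cancel]
      refine prod_congr rfl fun k _ => ?_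
      rw [Nat.add_comm 1 k, ← Finset.Ico_add_one_right_eq_Icc, prod_Ico_eq_prod_range]
      simp only [Nat.add_sub_cancel]
      refine prod_congr rfl fun j _ => ?_
      rw [show (1 : ℤ) - ((1+j : ℕ):ℤ) = -(j:ℤ) by push_cast; ring,
        show ((k+1 : ℕ):ℤ) - 1 = (k:ℤ) by push_cast; ring]
    have hNconv : (∏ i ∈ Finset.Icc 1 L,
          ((1 - q ^ (-(lam i : ℤ)) * t ^ (i : ℤ) * w) *
            (1 - q ^ (-(lam (i + 1) : ℤ) + 1) * t ^ ((i : ℤ) - 1) * w)))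
        = ∏ k ∈ range L, ((1 - q ^ (-(lam (k+1) : ℤ)) * t ^ ((k:ℤ)+1) * w) *
            (1 - q ^ (-(lam (k+1+1) : ℤ)) * q * t ^ (k:ℤ) * w)) := by
      rw [← Finset.Ico_add_one_right_eq_Icc, prod_Ico_eq_prod_range]
      simp only [Nat.add_sub_cancel]
      refine prod_congr rfl fun k _ => ?_
      rw [Nat.add_comm 1 k]
      rw [show ((k+1 : ℕ):ℤ) = (k:ℤ)+1 by push_cast; ring]
      rw [show ((k:ℤ)+1) - 1 = (k:ℤ) by ring]
      rw [zpow_add₀ hq, zpow_one]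
    have hDconv : (∏ i ∈ Finset.Icc 1 L,
          ((1 - q ^ (-(lam (i + 1) : ℤ)) * t ^ (i : ℤ) * w) *
            (1 - q ^ (-(lam i : ℤ) + 1) * t ^ ((i : ℤ) - 1) * w)))
        = ∏ k ∈ range L, ((1 - q ^ (-(lam (k+1+1) : ℤ)) * t ^ ((k:ℤ)+1) * w) *
            (1 - q ^ (-(lam (k+1) : ℤ)) * q * t ^ (k:ℤ) * w)) := by
      rw [← Finset.Ico_add_one_right_eq_Icc, prod_Ico_eq_prod_range]
      simp only [Nat.add_sub_cancel]
      refine prod_congr rfl fun k _ => ?_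
      rw [Nat.add_comm 1 k]
      rw [show ((k+1 : ℕ):ℤ) = (k:ℤ)+1 by push_cast; ring]
      rw [show ((k:ℤ)+1) - 1 = (k:ℤ) by ring]
      rw [zpow_add₀ hq, zpow_one]
    -- nonvanishing of denominators
    have hGmne : (∏ i ∈ Finset.Icc 1 L, ∏ j ∈ Finset.Icc 1 (lam i),
        Gminus q t (q ^ (1 - (j : ℤ)) * t ^ ((i : ℤ) - 1) * w)) ≠ 0 :=
      prod_ne_zero_iff.mpr fun i hi => prod_ne_zero_iff.mpr fun j hj => hg i hi j hj
    have hDenne : ((1 - q * t⁻¹ * w) * ((1 - q ^ (-(lam 1 : ℤ)) * w) *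
        ∏ i ∈ Finset.Icc 1 L,
          ((1 - q ^ (-(lam (i + 1) : ℤ)) * t ^ (i : ℤ) * w) *
            (1 - q ^ (-(lam i : ℤ) + 1) * t ^ ((i : ℤ) - 1) * w)))) ≠ 0 :=
      mul_ne_zero hr (mul_ne_zero hB0
        (prod_ne_zero_iff.mpr fun i hi => mul_ne_zero (hB i hi).1 (hB i hi).2))
    simp only [gfun, prod_div_distrib]
    rw [Bminus, prod_div_distrib, div_mul_div_comm, div_mul_div_comm,
      div_eq_div_iff hGmne hDenne]
    rw [hGpconv, hGmconv, hNconv, hDconv,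
      show (1:K) - q ^ (-(lam 1 : ℤ) + 1) * t⁻¹ * w
          = 1 - q ^ (-(lam 1 : ℤ)) * q * t⁻¹ * w by rw [zpow_add₀ hq, zpow_one]]
    linear_combination M

end
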